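/- A finite simple graph is switching equivalent to a threshold graph if and only if it is a restricted 2-threshold graph. -/

import Mathlib

/-- `G` is a threshold graph: every nonempty induced subgraph (given by a nonempty vertex
subset `W`) has a vertex that is isolated in it or universal in it. -/
def IsThreshold {V : Type*} (G : SimpleGraph V) : Prop :=
  ∀ W : Set V, W.Nonempty → ∃ x ∈ W,
    (∀ y ∈ W, ¬ G.Adj x y) ∨ (∀ y ∈ W, y ≠ x → G.Adj x y)

/-- The switch of `G` with respect to `S`: distinct vertices `u, v` are adjacent iff
either they are adjacent in `G` and both in `S` or both outside `S`, or they are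
nonadjacent in `G` and exactly one of them is in `S`. -/
def switch {V : Type*} (G : SimpleGraph V) (S : Set V) : SimpleGraph V :=
  SimpleGraph.fromRel (fun u v =>
    (G.Adj u v ∧ ((u ∈ S ∧ v ∈ S) ∨ (u ∉ S ∧ v ∉ S))) ∨
    (¬ G.Adj u v ∧ Xor' (u ∈ S) (v ∈ S)))

/-- `G` is a restricted 2-threshold graph: there is a black-and-white coloring `c`
(white = `true`) and a linear ordering of the vertices (given by `e : Fin n ≃ V`) such
that every vertex is adjacent to exactly the white earlier vertices or to exactly the
black earlier vertices. -/
def IsRestricted2Threshold {V : Type*} (G : SimpleGraph V) : Prop :=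
  ∃ (n : ℕ) (e : Fin n ≃ V) (c : V → Bool), ∀ i : Fin n,
    (∀ j : Fin n, j < i → (G.Adj (e i) (e j) ↔ c (e j) = true)) ∨
    (∀ j : Fin n, j < i → (G.Adj (e i) (e j) ↔ c (e j) = false))

lemma switch_adj {V : Type*} (G : SimpleGraph V) (S : Set V) (u v : V) :
    (switch G S).Adj u v ↔ u ≠ v ∧ (G.Adj u v ↔ (u ∈ S ↔ v ∈ S)) := by
  simp only [switch, SimpleGraph.fromRel_adj, Xor', Xor]
  have h := G.adj_comm u v
  tauto

/-- A graph with a creation ordering (each vertex isolated or universal among earlier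
vertices) is threshold. -/
lemma ordering_isThreshold {V : Type*} [Fintype V] (H : SimpleGraph V)
    (n : ℕ) (e : Fin n ≃ V)
    (he : ∀ i : Fin n,
      (∀ j : Fin n, j < i → ¬ H.Adj (e i) (e j)) ∨
      (∀ j : Fin n, j < i → H.Adj (e i) (e j))) :
    IsThreshold H := by
  classical
  intro W hW
  obtain ⟨x, hxW, hxmax⟩ := Finset.exists_max_image (Set.toFinite W).toFinset
    (fun v => e.symm v) (((Set.toFinite W).toFinset_nonempty).2 hW)
  rw [Set.Finite.mem_toFinset] at hxW
  have hlt : ∀ y ∈ W, y ≠ x → e.symm y < e.symm x := by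
    intro y hy hyx
    have hle := hxmax y ((Set.Finite.mem_toFinset _).2 hy)
    exact lt_of_le_of_ne hle (fun h => hyx (e.symm.injective h))
  refine ⟨x, hxW, ?_⟩
  rcases he (e.symm x) with h | h
  · refine Or.inl fun y hy => ?_
    by_cases hyx : y = x
    · subst hyx; simp
    · have := h (e.symm y) (hlt y hy hyx)
      simpa using this
  · refine Or.inr fun y hy hyx => ?_
    have := h (e.symm y) (hlt y hy hyx)
    simpa using this

/-- A threshold graph has a creation ordering. -/
lemma isThreshold_ordering (n : ℕ) : ∀ {V : Type*} [Fintype V], Fintype.card V = n →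
    ∀ H : SimpleGraph V, IsThreshold H →
    ∃ e : Fin n ≃ V, ∀ i : Fin n,
      (∀ j : Fin n, j < i → ¬ H.Adj (e i) (e j)) ∨
      (∀ j : Fin n, j < i → H.Adj (e i) (e j)) := by
  induction n with
  | zero =>
    intro V _ hc H _
    exact ⟨(Fintype.equivFinOfCardEq hc).symm, fun i => i.elim0⟩
  | succ m ih =>
    intro V _ hc H hH
    classical
    have : Nonempty V := Fintype.card_pos_iff.mp (by omega)
    obtain ⟨x, -, hx⟩ := hH Set.univ Set.univ_nonempty
    set V' := {y : V // y ≠ x} with hV'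
    have hc' : Fintype.card V' = m := by
      have h1 : Fintype.card V = Fintype.card (Option V') :=
        Fintype.card_congr (Equiv.optionSubtypeNe x).symm
      rw [Fintype.card_option] at h1
      omega
    set H' : SimpleGraph V' := H.comap (fun y : V' => y.1) with hH'def
    have hH' : IsThreshold H' := by
      intro W' hW'
      obtain ⟨w', hw'⟩ := hW'
      obtain ⟨z, hz, hz'⟩ := hH (Subtype.val '' W') ⟨w'.1, ⟨w', hw', rfl⟩⟩
      obtain ⟨z', hz'W, rfl⟩ := hz
      refine ⟨z', hz'W, ?_⟩
      rcases hz' with h | h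
      · exact Or.inl fun y hy => h y.1 ⟨y, hy, rfl⟩
      · exact Or.inr fun y hy hyz => h y.1 ⟨y, hy, rfl⟩
          (fun hh => hyz (Subtype.ext hh))
    obtain ⟨e', he'⟩ := ih hc' H' hH'
    refine ⟨finSuccEquivLast.trans (e'.optionCongr.trans (Equiv.optionSubtypeNe x)), ?_⟩
    set e := finSuccEquivLast.trans (e'.optionCongr.trans (Equiv.optionSubtypeNe x)) with hedef
    have helast : e (Fin.last m) = x := by
      rw [hedef]
      simp only [Equiv.trans_apply, finSuccEquivLast_last, Equiv.optionCongr_apply,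
        Option.map_none]
      rfl
    have hecast : ∀ i : Fin m, e (Fin.castSucc i) = (e' i).1 := by
      intro i
      rw [hedef]
      simp only [Equiv.trans_apply, finSuccEquivLast_castSucc, Equiv.optionCongr_apply,
        Option.map_some]
      rfl
    intro i
    induction i using Fin.lastCases with
    | last =>
      rcases hx with h | h
      · refine Or.inl fun j hj => ?_
        rw [helast]
        exact h (e j) (Set.mem_univ _)
      · refine Or.inr fun j hj => ?_
        rw [helast]
        refine h (e j) (Set.mem_univ _) ?_
        intro hh
        rw [← helast] at hh
        exact absurd (e.injective hh) (ne_of_lt hj)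
    | cast i' =>
      have key : ∀ j : Fin (m+1), j < Fin.castSucc i' →
          ∃ j' : Fin m, j = Fin.castSucc j' ∧ j' < i' := by
        intro j hj
        have hjl : j < Fin.last m := lt_of_lt_of_le hj (Fin.le_last _)
        refine ⟨j.castPred (Fin.ne_last_of_lt hjl), ?_, ?_⟩
        · simp
        · rw [← Fin.castSucc_lt_castSucc_iff]
          simpa using hj
      rcases he' i' with h | h
      · refine Or.inl fun j hj => ?_
        obtain ⟨j', rfl, hj'⟩ := key j hj
        rw [hecast, hecast]
        exact h j' hj'
      · refine Or.inr fun j hj => ?_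
        obtain ⟨j', rfl, hj'⟩ := key j hj
        rw [hecast, hecast]
        exact h j' hj'

/-- A finite simple graph is switching equivalent to a threshold graph iff it is a
restricted 2-threshold graph. -/
theorem switchingClass_threshold_iff_restricted2Threshold {V : Type*} [Fintype V]
    (G : SimpleGraph V) :
    (∃ S : Set V, IsThreshold (switch G S)) ↔ IsRestricted2Threshold G := by
  classical
  constructor
  · rintro ⟨S, hS⟩
    obtain ⟨e, he⟩ := isThreshold_ordering (Fintype.card V) rfl (switch G S) hS
    refine ⟨Fintype.card V, e, fun v => decide (v ∈ S), fun i => ?_⟩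
    have hne : ∀ j : Fin (Fintype.card V), j < i → e i ≠ e j :=
      fun j hj h => absurd (e.injective h) (ne_of_gt hj)
    by_cases hi : e i ∈ S
    · rcases he i with h | h
      · refine Or.inr fun j hj => ?_
        have hH : ¬ (switch G S).Adj (e i) (e j) := h j hj
        rw [switch_adj] at hH
        have h1 : ¬ (G.Adj (e i) (e j) ↔ (e i ∈ S ↔ e j ∈ S)) :=
          fun hh => hH ⟨hne j hj, hh⟩
        simp only [decide_eq_false_iff_not]
        tauto
      · refine Or.inl fun j hj => ?_
        have hH := h j hj
        rw [switch_adj] at hH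
        simp only [decide_eq_true_eq]
        tauto
    · rcases he i with h | h
      · refine Or.inl fun j hj => ?_
        have hH : ¬ (switch G S).Adj (e i) (e j) := h j hj
        rw [switch_adj] at hH
        have h1 : ¬ (G.Adj (e i) (e j) ↔ (e i ∈ S ↔ e j ∈ S)) :=
          fun hh => hH ⟨hne j hj, hh⟩
        simp only [decide_eq_true_eq]
        tauto
      · refine Or.inr fun j hj => ?_
        have hH := h j hj
        rw [switch_adj] at hH
        simp only [decide_eq_false_iff_not]
        tauto
  · rintro ⟨n, e, c, hc⟩
    have hcard : Fintype.card V = n := by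
      rw [← Fintype.card_fin n]
      exact Fintype.card_congr e.symm
    refine ⟨{v | c v = true}, ordering_isThreshold _ n e fun i => ?_⟩
    have hne : ∀ j : Fin n, j < i → e i ≠ e j :=
      fun j hj h => absurd (e.injective h) (ne_of_gt hj)
    have hb : ∀ v : V, c v = false ↔ ¬ c v = true := fun v => by simp
    rcases hc i with h | h
    · by_cases hi : c (e i) = true
      · refine Or.inr fun j hj => ?_
        rw [switch_adj]
        refine ⟨hne j hj, ?_⟩
        have := h j hj
        simp only [Set.mem_setOf_eq]
        tauto
      · refine Or.inl fun j hj => ?_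
        rw [switch_adj]
        rintro ⟨-, hh⟩
        have := h j hj
        simp only [Set.mem_setOf_eq] at hh
        tauto
    · by_cases hi : c (e i) = true
      · refine Or.inl fun j hj => ?_
        rw [switch_adj]
        rintro ⟨-, hh⟩
        have h2 := h j hj
        have h3 := hb (e j)
        simp only [Set.mem_setOf_eq] at hh
        tauto
      · refine Or.inr fun j hj => ?_
        rw [switch_adj]
        refine ⟨hne j hj, ?_⟩
        have h2 := h j hj
        have h3 := hb (e j)
        simp only [Set.mem_setOf_eq]
        tauto
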